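/- ∂_x^{L-N} [ x^{M-N+1} / (x-1)^{M-N+1} ] = (-1)^{L-N} ((M+L-2N)!/(M-N)!) · x^{M-L+1} (x-1)^{-(M+L-2N+1)} · ₂F₁(-L+N+1, -L+N; -L-M+2N; 1-x), for integers N ≤ L, N ≤ M, and x ∉ {1}. -/

import Mathlib

open scoped BigOperators

/-- The terminating Gauss hypergeometric polynomial `₂F₁(a, b; c; ·)` truncated at
degree `N` (here the series terminates by itself through the Pochhammer symbols),
evaluated at argument `w`. -/
noncomputable def F21termAt (N : ℕ) (a b c w : ℝ) : ℝ :=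
  ∑ k ∈ Finset.range (N + 1),
    (ascPochhammer ℝ k).eval a * (ascPochhammer ℝ k).eval b /
      (ascPochhammer ℝ k).eval c * w ^ k / (Nat.factorial k : ℝ)

open Finset

lemma castDescSucc (r j : ℕ) : ((r.descFactorial (j+1) : ℝ)) = ((r:ℝ) - j) * r.descFactorial j := by
  rcases le_or_gt j r with h | h
  · rw [Nat.descFactorial_succ]; push_cast [h]; ring
  · rw [Nat.descFactorial_eq_zero_iff_lt.2 (by omega),
      Nat.descFactorial_eq_zero_iff_lt.2 (by omega)]; simp

lemma pochNeg (k r : ℕ) : (ascPochhammer ℝ k).eval (-(r:ℝ)) = (-1)^k * r.descFactorial k := by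
  induction k with
  | zero => simp
  | succ k ih =>
    rw [ascPochhammer_succ_eval, ih, castDescSucc, pow_succ]
    ring

lemma altPascal (a : ℕ → ℝ) (k : ℕ) :
    ∑ j ∈ range (k+2), (-1:ℝ)^j * ((k+1).choose j) * a j
      = ∑ j ∈ range (k+1), (-1:ℝ)^j * (k.choose j) * (a j - a (j+1)) := by
  have h1 : ∑ j ∈ range (k+2), (-1:ℝ)^j * (k.choose j) * a j
      = ∑ j ∈ range (k+1), (-1:ℝ)^j * (k.choose j) * a j := by
    rw [sum_range_succ, Nat.choose_succ_self]
    simp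
  have h2 : ∑ j ∈ range (k+2), (-1:ℝ)^j * (k.choose j) * a j
      = (∑ j ∈ range (k+1), (-1:ℝ)^(j+1) * (k.choose (j+1)) * a (j+1)) + a 0 := by
    rw [sum_range_succ']
    simp
  have h3 : ∑ j ∈ range (k+2), (-1:ℝ)^j * ((k+1).choose j) * a j
      = (∑ j ∈ range (k+1), (-1:ℝ)^(j+1) * ((k+1).choose (j+1)) * a (j+1)) + a 0 := by
    rw [sum_range_succ']
    simp
  rw [h3]
  have h4 : ∑ j ∈ range (k+1), (-1:ℝ)^(j+1) * ((k+1).choose (j+1)) * a (j+1)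
      = (∑ j ∈ range (k+1), (-1:ℝ)^(j+1) * (k.choose j) * a (j+1))
        + ∑ j ∈ range (k+1), (-1:ℝ)^(j+1) * (k.choose (j+1)) * a (j+1) := by
    rw [← sum_add_distrib]
    refine sum_congr rfl fun j _ => ?_
    rw [Nat.choose_succ_succ]
    push_cast
    ring
  have h5 : ∑ j ∈ range (k+1), (-1:ℝ)^(j+1) * (k.choose (j+1)) * a (j+1)
      = (∑ j ∈ range (k+1), (-1:ℝ)^j * (k.choose j) * a j) - a 0 := by
    rw [← h1, h2]
    ring
  have h6 : ∑ j ∈ range (k+1), ((-1:ℝ)^(j+1) * (k.choose j) * a (j+1)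
        + (-1:ℝ)^j * (k.choose j) * a j)
      = ∑ j ∈ range (k+1), (-1:ℝ)^j * (k.choose j) * (a j - a (j+1)) := by
    refine sum_congr rfl fun j _ => ?_
    rw [pow_succ]
    ring
  rw [h4, h5, ← h6, sum_add_distrib]
  ring

lemma lemA (m : ℕ) : ∀ k n : ℕ, k ≤ n →
    ∑ j ∈ range (k+1), (-1:ℝ)^j * (k.choose j) * ((m+1).descFactorial j) * ((m+n-j).factorial)
      = (n-1).descFactorial k * ((m+n-k).factorial) := by
  intro k
  induction k with
  | zero => intro n _; simp
  | succ k ih =>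
    intro n hn
    obtain ⟨n', rfl⟩ : ∃ n', n = n' + 1 := ⟨n - 1, by omega⟩
    have hk : k ≤ n' := by omega
    have key : ∑ j ∈ range (k+2), (-1:ℝ)^j * ((k+1).choose j)
        * (((m+1).descFactorial j : ℝ) * ((m+(n'+1)-j).factorial))
        = ∑ j ∈ range (k+1), (-1:ℝ)^j * (k.choose j)
          * (((m+1).descFactorial j : ℝ) * ((m+(n'+1)-j).factorial)
            - ((m+1).descFactorial (j+1)) * ((m+(n'+1)-(j+1)).factorial)) :=
      altPascal _ k
    have step : ∀ j, j ≤ k →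
        (((m+1).descFactorial j : ℝ) * ((m+(n'+1)-j).factorial)
          - ((m+1).descFactorial (j+1)) * ((m+(n'+1)-(j+1)).factorial))
        = (n':ℝ) * (((m+1).descFactorial j) * ((m+n'-j).factorial)) := by
      intro j hj
      have e1 : m+(n'+1)-j = (m+n'-j)+1 := by omega
      have e2 : m+(n'+1)-(j+1) = m+n'-j := by omega
      rw [e1, e2, castDescSucc, Nat.factorial_succ]
      have e3 : ((m + n' - j : ℕ) : ℝ) = (m:ℝ) + n' - j := by
        push_cast [show j ≤ m + n' by omega]
        ring
      push_cast [e3]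
      ring
    have sum_eq : ∑ j ∈ range (k+2), (-1:ℝ)^j * ((k+1).choose j)
        * ((m+1).descFactorial j) * ((m+(n'+1)-j).factorial)
        = (n':ℝ) * ∑ j ∈ range (k+1), (-1:ℝ)^j * (k.choose j)
            * ((m+1).descFactorial j) * ((m+n'-j).factorial) := by
      calc ∑ j ∈ range (k+2), (-1:ℝ)^j * ((k+1).choose j)
            * ((m+1).descFactorial j) * ((m+(n'+1)-j).factorial)
          = ∑ j ∈ range (k+2), (-1:ℝ)^j * ((k+1).choose j)
            * (((m+1).descFactorial j : ℝ) * ((m+(n'+1)-j).factorial)) := by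
            refine sum_congr rfl fun j _ => by ring
        _ = _ := by
            rw [key, mul_sum]
            refine sum_congr rfl fun j hj => ?_
            rw [step j (by simp at hj; omega)]
            ring
    rw [show k+1+1 = k+2 from rfl, sum_eq, ih n' hk]
    have e4 : m+(n'+1)-(k+1) = m+n'-k := by omega
    rw [e4]
    rcases Nat.eq_zero_or_pos n' with h0 | h0
    · subst h0
      interval_cases k
      simp
    · obtain ⟨t, rfl⟩ : ∃ t, n' = t + 1 := ⟨n' - 1, by omega⟩
      have e5 : (t+1+1-1) = t+1 := by omega
      rw [e5, Nat.succ_descFactorial_succ]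
      have e6 : (t+1-1) = t := by omega
      rw [e6]
      push_cast
      ring

lemma triangleSum (n : ℕ) (f : ℕ → ℕ → ℝ) :
    ∑ j ∈ range (n+1), ∑ i ∈ range (n+1-j), f j i
      = ∑ k ∈ range (n+1), ∑ j ∈ range (k+1), f j (k-j) := by
  rw [Finset.sum_sigma', Finset.sum_sigma']
  refine Finset.sum_nbij' (fun p => (⟨p.1+p.2, p.1⟩ : Σ _ : ℕ, ℕ))
    (fun p => (⟨p.2, p.1-p.2⟩ : Σ _ : ℕ, ℕ)) ?_ ?_ ?_ ?_ ?_
  · rintro ⟨j, i⟩ hp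
    simp only [Finset.mem_sigma, Finset.mem_range] at *
    omega
  · rintro ⟨k, j⟩ hp
    simp only [Finset.mem_sigma, Finset.mem_range] at *
    omega
  · rintro ⟨j, i⟩ hp
    simp
  · rintro ⟨k, j⟩ hp
    simp only [Finset.mem_sigma, Finset.mem_range] at hp
    have : j + (k - j) = k := by omega
    simp [this]
  · rintro ⟨j, i⟩ hp
    simp


noncomputable def cc (m n j : ℕ) : ℝ :=
  (-1)^(n-j) * (n.choose j) * ((m+1).descFactorial j) * ((m+n-j).factorial) / (m.factorial)

noncomputable def gfun (m n : ℕ) : ℝ → ℝ := fun x =>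
  ∑ j ∈ range (n+1), cc m n j * x^((m:ℤ)+1-j) * (x-1)^((j:ℤ)-((m:ℤ)+n+1))

lemma cc_zero (m n : ℕ) : cc m (n+1) 0 = (0 - ((m:ℝ)+n+1)) * cc m n 0 := by
  simp only [cc, Nat.choose_zero_right, Nat.descFactorial_zero, Nat.sub_zero]
  rw [show m + (n+1) = (m+n)+1 by omega, Nat.factorial_succ, pow_succ]
  push_cast
  ring

lemma cc_top (m n : ℕ) : cc m n (n+1) = 0 := by
  simp [cc, Nat.choose_eq_zero_of_lt (by omega : n < n+1)]

lemma cc_rec (m n j : ℕ) (hj : j ≤ n) :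
    cc m (n+1) (j+1) = ((m:ℝ)+1-j) * cc m n j + (((j:ℝ)+1) - ((m:ℝ)+n+1)) * cc m n (j+1) := by
  rcases eq_or_lt_of_le hj with rfl | hlt
  · have hz : (j.choose (j+1) : ℝ) = 0 := by
      rw [Nat.choose_eq_zero_of_lt (by omega)]; simp
    simp only [cc, hz]
    rw [show (j+1) - (j+1) = 0 by omega, show j - j = 0 by omega,
      show m + (j+1) - (j+1) = m by omega, show m + j - j = m by omega,
      Nat.choose_self, Nat.choose_self, castDescSucc]
    push_cast
    ring
  · obtain ⟨d, rfl⟩ : ∃ d, n = j + d + 1 := ⟨n - j - 1, by omega⟩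
    simp only [cc]
    rw [show (j+d+1+1) - (j+1) = d+1 by omega, show (j+d+1) - j = d+1 by omega,
      show (j+d+1) - (j+1) = d by omega,
      show m + (j+d+1+1) - (j+1) = (m+d)+1 by omega,
      show m + (j+d+1) - j = (m+d)+1 by omega,
      show m + (j+d+1) - (j+1) = m+d by omega,
      Nat.choose_succ_succ (j+d+1) j, castDescSucc, Nat.factorial_succ]
    push_cast
    ring

lemma derivG (m n : ℕ) : ∀ x : ℝ, x ≠ 0 → x ≠ 1 →
    iteratedDeriv n (fun t : ℝ => t ^ ((m:ℤ)+1) * (t-1) ^ (-((m:ℤ)+1))) x = gfun m n x := by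
  induction n with
  | zero =>
    intro x hx0 hx1
    rw [iteratedDeriv_zero]
    simp only [gfun]
    rw [sum_range_one]
    simp only [cc, Nat.choose_zero_right, Nat.descFactorial_zero, Nat.add_zero, Nat.sub_zero]
    push_cast
    rw [show ((-1:ℝ))^0 * 1 * 1 * (m.factorial:ℝ) / m.factorial = 1 by
      rw [pow_zero]
      field_simp]
    rw [show (m:ℤ)+1-0 = (m:ℤ)+1 by ring, show (0:ℤ)-((m:ℤ)+0+1) = -((m:ℤ)+1) by ring]
    ring
  | succ n ih =>
    intro x hx0 hx1
    rw [iteratedDeriv_succ]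
    have hopen : IsOpen {t : ℝ | t ≠ 0 ∧ t ≠ 1} := by
      have : {t : ℝ | t ≠ 0 ∧ t ≠ 1} = {(0:ℝ)}ᶜ ∩ {(1:ℝ)}ᶜ := by
        ext t; simp [Set.mem_inter_iff]
      rw [this]
      exact (isOpen_compl_singleton).inter isOpen_compl_singleton
    have hev : iteratedDeriv n (fun t : ℝ => t ^ ((m:ℤ)+1) * (t-1) ^ (-((m:ℤ)+1)))
        =ᶠ[nhds x] gfun m n := by
      filter_upwards [hopen.mem_nhds ⟨hx0, hx1⟩] with t ht
      exact ih t ht.1 ht.2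
    rw [hev.deriv_eq]
    have hu0 : x - 1 ≠ 0 := sub_ne_zero.2 hx1
    have hsum : HasDerivAt (gfun m n)
        (∑ j ∈ range (n+1), cc m n j *
          (((((m:ℤ)+1-j : ℤ):ℝ) * x^((m:ℤ)+1-j-1)) * (x-1)^((j:ℤ)-((m:ℤ)+n+1))
           + x^((m:ℤ)+1-j) * ((((j:ℤ)-((m:ℤ)+n+1) : ℤ):ℝ) * (x-1)^((j:ℤ)-((m:ℤ)+n+1)-1)))) x := by
      have hGeq : gfun m n = fun y : ℝ =>
          ∑ j ∈ range (n+1), cc m n j * (y^((m:ℤ)+1-j) * (y-1)^((j:ℤ)-((m:ℤ)+n+1))) := by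
        funext y
        exact sum_congr rfl fun j _ => mul_assoc _ _ _
      rw [hGeq]
      apply HasDerivAt.fun_sum
      intro j _
      have h1 : HasDerivAt (fun y : ℝ => y^((m:ℤ)+1-j))
          ((((m:ℤ)+1-j : ℤ):ℝ) * x^((m:ℤ)+1-j-1)) x := hasDerivAt_zpow _ _ (Or.inl hx0)
      have h2' : HasDerivAt (fun y : ℝ => y^((j:ℤ)-((m:ℤ)+n+1)))
          ((((j:ℤ)-((m:ℤ)+n+1) : ℤ):ℝ) * (x-1)^((j:ℤ)-((m:ℤ)+n+1)-1)) (x-1) :=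
        hasDerivAt_zpow _ _ (Or.inl hu0)
      have h2 : HasDerivAt (fun y : ℝ => (y-1)^((j:ℤ)-((m:ℤ)+n+1)))
          ((((j:ℤ)-((m:ℤ)+n+1) : ℤ):ℝ) * (x-1)^((j:ℤ)-((m:ℤ)+n+1)-1)) x := by
        have := h2'.comp x ((hasDerivAt_id x).sub_const 1)
        simpa [Function.comp_def] using this
      exact (h1.mul h2).const_mul (cc m n j)
    rw [hsum.deriv]
    -- algebra part
    set A : ℕ → ℝ := fun j => cc m n j * ((m:ℝ)+1-j) * x^((m:ℤ)-j) * (x-1)^((j:ℤ)-((m:ℤ)+n+1)) with hA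
    set B : ℕ → ℝ := fun j => cc m n j * ((j:ℝ)-((m:ℝ)+n+1)) * x^((m:ℤ)+1-j) * (x-1)^((j:ℤ)-((m:ℤ)+n+2)) with hB
    have hsplit : ∑ j ∈ range (n+1), cc m n j *
          (((((m:ℤ)+1-j : ℤ):ℝ) * x^((m:ℤ)+1-j-1)) * (x-1)^((j:ℤ)-((m:ℤ)+n+1))
           + x^((m:ℤ)+1-j) * ((((j:ℤ)-((m:ℤ)+n+1) : ℤ):ℝ) * (x-1)^((j:ℤ)-((m:ℤ)+n+1)-1)))
        = (∑ j ∈ range (n+1), A j) + ∑ j ∈ range (n+1), B j := by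
      rw [← sum_add_distrib]
      refine sum_congr rfl fun j _ => ?_
      simp only [hA, hB]
      rw [show (m:ℤ)+1-j-1 = (m:ℤ)-j by ring, show (j:ℤ)-((m:ℤ)+n+1)-1 = (j:ℤ)-((m:ℤ)+n+2) by ring]
      push_cast
      ring
    rw [hsplit]
    have hBext : ∑ j ∈ range (n+1), B j = (∑ j ∈ range (n+1), B (j+1)) + B 0 := by
      have : ∑ j ∈ range (n+2), B j = ∑ j ∈ range (n+1), B j := by
        rw [sum_range_succ, hB]
        simp [cc_top]
      rw [← this, sum_range_succ']
    rw [hBext]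
    have hgoal : gfun m (n+1) x = (∑ j ∈ range (n+1),
        (cc m (n+1) (j+1) * x^((m:ℤ)+1-(j+1:ℕ)) * (x-1)^(((j+1:ℕ):ℤ)-((m:ℤ)+(n+1:ℕ)+1))))
        + cc m (n+1) 0 * x^((m:ℤ)+1-(0:ℕ)) * (x-1)^(((0:ℕ):ℤ)-((m:ℤ)+(n+1:ℕ)+1)) := by
      rw [gfun, sum_range_succ']
    rw [hgoal]
    have hT0 : cc m (n+1) 0 * x^((m:ℤ)+1-(0:ℕ)) * (x-1)^(((0:ℕ):ℤ)-((m:ℤ)+(n+1:ℕ)+1)) = B 0 := by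
      rw [hB, cc_zero]
      push_cast
      rw [show (0:ℤ)-((m:ℤ)+(n+1)+1) = (0:ℤ)-((m:ℤ)+n+2) by ring]
      ring
    have hTj : ∀ j ∈ range (n+1),
        cc m (n+1) (j+1) * x^((m:ℤ)+1-(j+1:ℕ)) * (x-1)^(((j+1:ℕ):ℤ)-((m:ℤ)+(n+1:ℕ)+1))
          = A j + B (j+1) := by
      intro j hj
      have hjn : j ≤ n := by simp at hj; omega
      rw [hA, hB, cc_rec m n j hjn]
      push_cast
      rw [show (m:ℤ)+1-((j:ℤ)+1) = (m:ℤ)-j by ring,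
        show ((j:ℤ)+1)-((m:ℤ)+((n:ℤ)+1)+1) = (j:ℤ)-((m:ℤ)+n+1) by ring,
        show ((j:ℤ)+1)-((m:ℤ)+(n:ℤ)+2) = (j:ℤ)-((m:ℤ)+n+1) by ring]
      ring
    rw [sum_congr rfl hTj, hT0, sum_add_distrib]
    ring

lemma gfun_eq (m n : ℕ) (x : ℝ) (hx0 : x ≠ 0) (hx1 : x ≠ 1) :
    gfun m n x = (-1:ℝ)^n * (((m+n).factorial : ℝ) / (m.factorial : ℝ))
      * x^((m:ℤ)-n+1) * (x-1)^(-((m:ℤ)+n+1))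
      * F21termAt n (-(n:ℝ)+1) (-(n:ℝ)) (-(n:ℝ)-m) (1-x) := by
  have hu0 : x - 1 ≠ 0 := sub_ne_zero.2 hx1
  -- RHS as explicit sum
  have hR : (-1:ℝ)^n * (((m+n).factorial : ℝ) / (m.factorial : ℝ))
      * x^((m:ℤ)-n+1) * (x-1)^(-((m:ℤ)+n+1))
      * F21termAt n (-(n:ℝ)+1) (-(n:ℝ)) (-(n:ℝ)-m) (1-x)
      = ∑ k ∈ range (n+1), (-1:ℝ)^n * (((m+n).factorial : ℝ) / (m.factorial : ℝ))
          * (((n-1).descFactorial k : ℝ) * (n.descFactorial k : ℝ)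
              / (((n+m).descFactorial k : ℝ) * (k.factorial : ℝ)))
          * x^((m:ℤ)-n+1) * (x-1)^((k:ℤ)-((m:ℤ)+n+1)) := by
    rw [F21termAt, mul_sum]
    refine sum_congr rfl fun k hk => ?_
    have hkn : k ≤ n := by simp at hk; omega
    have ha : (ascPochhammer ℝ k).eval (-(n:ℝ)+1) = (-1)^k * ((n-1).descFactorial k : ℝ) := by
      rcases Nat.eq_zero_or_pos n with rfl | hn
      · interval_cases k
        simp
      · have : -(n:ℝ)+1 = -(((n-1:ℕ)):ℝ) := by
          push_cast [Nat.cast_sub hn]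
          ring
        rw [this, pochNeg]
    have hb : (ascPochhammer ℝ k).eval (-(n:ℝ)) = (-1)^k * (n.descFactorial k : ℝ) :=
      pochNeg k n
    have hc : (ascPochhammer ℝ k).eval (-(n:ℝ)-m) = (-1)^k * ((n+m).descFactorial k : ℝ) := by
      have : -(n:ℝ)-m = -(((n+m:ℕ)):ℝ) := by push_cast; ring
      rw [this, pochNeg]
    have hw : (1-x)^k = (-1:ℝ)^k * (x-1)^k := by
      rw [show (1-x) = -(x-1) by ring, neg_pow]
    have hz : (x-1)^(-((m:ℤ)+n+1)) * (x-1)^(k:ℕ)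
        = (x-1)^((k:ℤ)-((m:ℤ)+n+1)) := by
      rw [← zpow_natCast (x-1) k, ← zpow_add₀ hu0, show -((m:ℤ)+n+1) + k = (k:ℤ)-((m:ℤ)+n+1) by ring]
    rw [ha, hb, hc, hw]
    have hcne : ((n+m).descFactorial k : ℝ) ≠ 0 := by
      have : k ≤ n + m := by omega
      exact_mod_cast Nat.cast_ne_zero.2 (by
        intro h
        exact absurd (Nat.descFactorial_eq_zero_iff_lt.1 h) (by omega))
    have hkf : (k.factorial : ℝ) ≠ 0 := by positivity
    have hm1 : ((-1:ℝ))^k ≠ 0 := by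
      apply pow_ne_zero; norm_num
    rw [← hz]
    have hs : (-1:ℝ)^k * (-1:ℝ)^k = 1 := by
      rw [← pow_add, show k+k = 2*k by ring, pow_mul]
      norm_num
    field_simp
    linear_combination ((((n-1).descFactorial k:ℕ):ℝ) * ((n.descFactorial k:ℕ):ℝ)) * hs
  rw [hR]
  -- LHS as double sum
  have hxp : ∀ p : ℕ, x^p = ∑ i ∈ range (p+1), (x-1)^i * ((p.choose i : ℕ) : ℝ) := by
    intro p
    conv_lhs => rw [show x = (x-1)+1 by ring]
    rw [add_pow]
    simp
  have hL : gfun m n x = ∑ j ∈ range (n+1), ∑ i ∈ range (n+1-j),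
      cc m n j * (((n-j).choose i : ℕ) : ℝ) * x^((m:ℤ)-n+1)
        * (x-1)^(((i+j:ℕ):ℤ)-((m:ℤ)+n+1)) := by
    rw [gfun]
    refine sum_congr rfl fun j hj => ?_
    have hjn : j ≤ n := by simp at hj; omega
    have e1 : (m:ℤ)+1-j = ((m:ℤ)-n+1) + ((n-j:ℕ):ℤ) := by
      push_cast [Nat.cast_sub hjn]
      ring
    rw [e1, zpow_add₀ hx0, zpow_natCast, hxp (n-j), show n+1-j = (n-j)+1 by omega]
    rw [mul_sum, mul_sum, sum_mul]
    refine sum_congr rfl fun i hi => ?_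
    have hz2 : (x-1)^(i:ℕ) * (x-1)^((j:ℤ)-((m:ℤ)+n+1)) = (x-1)^(((i+j:ℕ):ℤ)-((m:ℤ)+n+1)) := by
      rw [← zpow_natCast (x-1) i, ← zpow_add₀ hu0]
      congr 1
      push_cast
      ring
    rw [← hz2]
    ring
  rw [hL, triangleSum]
  refine sum_congr rfl fun k hk => ?_
  have hkn : k ≤ n := by simp at hk; omega
  -- inner sum
  have hinner : ∀ j ∈ range (k+1),
      cc m n j * (((n-j).choose (k-j) : ℕ) : ℝ) * x^((m:ℤ)-n+1)
        * (x-1)^((((k-j)+j:ℕ):ℤ)-((m:ℤ)+n+1))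
      = (cc m n j * (((n-j).choose (k-j) : ℕ) : ℝ))
        * (x^((m:ℤ)-n+1) * (x-1)^((k:ℤ)-((m:ℤ)+n+1))) := by
    intro j hj
    have : (k-j)+j = k := by simp at hj; omega
    rw [this]
    ring
  rw [sum_congr rfl hinner, ← sum_mul]
  -- coefficient identity
  have hcoef : ∑ j ∈ range (k+1), cc m n j * (((n-j).choose (k-j) : ℕ) : ℝ)
      = (-1:ℝ)^n * (((m+n).factorial : ℝ) / (m.factorial : ℝ))
        * (((n-1).descFactorial k : ℝ) * (n.descFactorial k : ℝ)
            / (((n+m).descFactorial k : ℝ) * (k.factorial : ℝ))) := by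
    have step1 : ∀ j ∈ range (k+1),
        cc m n j * (((n-j).choose (k-j) : ℕ) : ℝ)
        = ((-1:ℝ)^n * (n.choose k : ℝ) / (m.factorial : ℝ))
          * ((-1:ℝ)^j * (k.choose j : ℝ) * (((m+1).descFactorial j : ℕ) : ℝ)
              * (((m+n-j).factorial : ℕ) : ℝ)) := by
      intro j hj
      have hjk : j ≤ k := by simp at hj; omega
      have hsign : ((-1:ℝ))^(n-j) = (-1:ℝ)^n * (-1:ℝ)^j := by
        rw [← pow_add, show n+j = (n-j)+2*j by omega, pow_add, pow_mul]
        norm_num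
      have hch : ((n.choose j : ℕ) : ℝ) * (((n-j).choose (k-j) : ℕ) : ℝ)
          = ((n.choose k : ℕ) : ℝ) * ((k.choose j : ℕ) : ℝ) := by
        rw [← Nat.cast_mul, ← Nat.cast_mul, ← Nat.choose_mul (n := n) (k := k) hjk]
      rw [cc, hsign]
      field_simp
      linear_combination (((m+1).descFactorial j : ℕ):ℝ) * hch
    rw [sum_congr rfl step1, ← mul_sum]
    have : ∑ j ∈ range (k+1), ((-1:ℝ)^j * (k.choose j : ℝ) * (((m+1).descFactorial j : ℕ) : ℝ)
        * (((m+n-j).factorial : ℕ) : ℝ))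
        = ∑ j ∈ range (k+1), (-1:ℝ)^j * (k.choose j : ℝ) * (((m+1).descFactorial j : ℕ) : ℝ)
          * (((m+n-j).factorial : ℕ) : ℝ) := by
      refine sum_congr rfl fun j _ => by ring
    rw [this, lemA m k n hkn]
    -- numeric identity
    have hfd : ((n+m-k).factorial : ℝ) * ((n+m).descFactorial k : ℝ) = ((n+m).factorial : ℝ) := by
      rw [← Nat.cast_mul, Nat.factorial_mul_descFactorial (by omega : k ≤ n+m)]
    have hdc : ((n.descFactorial k : ℕ) : ℝ) = (k.factorial : ℝ) * (n.choose k : ℝ) := by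
      rw [← Nat.cast_mul, Nat.descFactorial_eq_factorial_mul_choose]
    have hcne : ((n+m).descFactorial k : ℝ) ≠ 0 := by
      refine Nat.cast_ne_zero.2 (fun h => ?_)
      exact absurd (Nat.descFactorial_eq_zero_iff_lt.1 h) (by omega)
    have hkf : (k.factorial : ℝ) ≠ 0 := by positivity
    have hmf : (m.factorial : ℝ) ≠ 0 := by positivity
    have emn : m+n-k = n+m-k := by omega
    have emn2 : ((m+n).factorial : ℝ) = ((n+m).factorial : ℝ) := by rw [Nat.add_comm]
    rw [emn, emn2, hdc]
    field_simp
    linear_combination ((n.choose k : ℕ):ℝ) * (((n-1).descFactorial k : ℕ):ℝ) * hfd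
  rw [hcoef]
  ring


/-- For integers `N ≤ L`, `N ≤ M` and `x ∉ {0,1}`,
`∂_x^{L-N}[x^{M-N+1}/(x-1)^{M-N+1}]
 = (-1)^{L-N}((M+L-2N)!/(M-N)!)·x^{M-L+1}(x-1)^{-(M+L-2N+1)}
   ·₂F₁(-L+N+1, -L+N; -L-M+2N; 1-x)`. -/
theorem iteratedDeriv_formula_D (L M N : ℕ) (hNL : N ≤ L) (hNM : N ≤ M) (x : ℝ)
    (hx0 : x ≠ 0) (hx1 : x ≠ 1) :
    iteratedDeriv (L - N)
        (fun t : ℝ => t ^ ((M : ℤ) - N + 1) * (t - 1) ^ (-((M : ℤ) - N + 1))) x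
      = (-1 : ℝ) ^ (L - N) *
          ((Nat.factorial (M + L - 2 * N) : ℝ) / (Nat.factorial (M - N) : ℝ)) *
          x ^ ((M : ℤ) - L + 1) * (x - 1) ^ (-((M : ℤ) + L - 2 * N + 1)) *
          F21termAt (L - N) (-(L : ℝ) + N + 1) (-(L : ℝ) + N)
            (-(L : ℝ) - M + 2 * N) (1 - x) := by
  have hfun : (fun t : ℝ => t ^ ((M : ℤ) - N + 1) * (t - 1) ^ (-((M : ℤ) - N + 1)))
      = (fun t : ℝ => t ^ (((M - N : ℕ) : ℤ) + 1) * (t - 1) ^ (-(((M - N : ℕ) : ℤ) + 1))) := by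
    have e : (M : ℤ) - N + 1 = ((M - N : ℕ) : ℤ) + 1 := by omega
    funext t
    rw [e]
  rw [hfun, derivG (M - N) (L - N) x hx0 hx1, gfun_eq (M - N) (L - N) x hx0 hx1]
  have e1 : (M - N) + (L - N) = M + L - 2 * N := by omega
  have e2 : ((M - N : ℕ) : ℤ) - ((L - N : ℕ) : ℤ) + 1 = (M : ℤ) - L + 1 := by omega
  have e3 : -(((M - N : ℕ) : ℤ) + ((L - N : ℕ) : ℤ) + 1) = -((M : ℤ) + L - 2 * N + 1) := by omega
  have e4 : -((L - N : ℕ) : ℝ) + 1 = -(L : ℝ) + N + 1 := by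
    rw [Nat.cast_sub hNL]; ring
  have e5 : -((L - N : ℕ) : ℝ) = -(L : ℝ) + N := by
    rw [Nat.cast_sub hNL]; ring
  have e6 : -(L : ℝ) + N - ((M - N : ℕ) : ℝ) = -(L : ℝ) - M + 2 * N := by
    rw [Nat.cast_sub hNM]; ring
  rw [e1, e2, e3, e4, e5, e6]
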